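/- arXiv:2103.04579 — 4 statements merged into one kernel-verified Lean document; each statement's English description precedes it below -/
import Mathlib

section
/- Let n, n_y, q be natural numbers with n_y - 2q > 0, and let W ⊆ {1, ..., n_y} with card(W) ≤ q. Let x : ℕ → ℝⁿ be the true state trajectory, and for each subset J of {1, ..., n_y} with card(J) = n_y - q or card(J) = n_y - 2q, let x̂_J : ℕ → ℝⁿ be an estimate trajectory. Set e₀ = max over all such J of ‖x̂_J(0) - x(0)‖ (Euclidean norm). Assume that for every such J with J ∩ W = ∅ there exists a class-KL function β_J such that ‖x̂_J(k) - x(k)‖ ≤ β_J(e₀, k) for all k ∈ ℕ. For each J with card(J) = n_y - q define π_J(k) = max over all S ⊆ J with card(S) = n_y - 2q of ‖x̂_J(k) - x̂_S(k)‖, and let σ : ℕ → {subsets of {1, ..., n_y}} be any selection with card(σ(k)) = n_y - q and π_{σ(k)}(k) ≤ π_J(k) for every J with card(J) = n_y - q. Then there exists a class-KL function β̄ such that ‖x̂_{σ(k)}(k) - x(k)‖ ≤ β̄(e₀, k) for all k ∈ ℕ. -/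
/-- A function `β : ℝ → ℕ → ℝ` is of class KL if, for each fixed `k`, the map
`r ↦ β r k` is continuous and strictly increasing on `[0, ∞)` with `β 0 k = 0`,
and for each fixed `r ≥ 0`, the map `k ↦ β r k` is nonincreasing and tends to `0`
as `k → ∞`. -/
def IsClassKL (β : ℝ → ℕ → ℝ) : Prop :=
  (∀ k : ℕ, ContinuousOn (fun r => β r k) (Set.Ici (0 : ℝ)) ∧
      StrictMonoOn (fun r => β r k) (Set.Ici (0 : ℝ)) ∧ β 0 k = 0) ∧
  (∀ r : ℝ, 0 ≤ r →
      Antitone (fun k => β r k) ∧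
      Filter.Tendsto (fun k => β r k) Filter.atTop (nhds 0))

/-- Theorem 1 of the paper: the multi-observer estimator `x̂(k) = x̂_{σ(k)}(k)`,
where `σ(k)` minimizes the deviation statistic `π_J(k)` over all `J` of cardinality
`n_y - q`, has asymptotically stable estimation error despite sensor attacks. -/
theorem complete_multiobserver_estimator_KL_bound
    (n n_y q : ℕ) (h1 : 0 < n_y - 2 * q)
    (W : Finset (Fin n_y)) (hW : W.card ≤ q)
    (x : ℕ → EuclideanSpace ℝ (Fin n))
    (xhat : Finset (Fin n_y) → ℕ → EuclideanSpace ℝ (Fin n))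
    (e₀ : ℝ)
    (he₀ : e₀ = sSup {r : ℝ | ∃ J : Finset (Fin n_y),
      (J.card = n_y - q ∨ J.card = n_y - 2 * q) ∧ r = ‖xhat J 0 - x 0‖})
    (hstable : ∀ J : Finset (Fin n_y),
      (J.card = n_y - q ∨ J.card = n_y - 2 * q) → J ∩ W = ∅ →
      ∃ β : ℝ → ℕ → ℝ, IsClassKL β ∧ ∀ k : ℕ, ‖xhat J k - x k‖ ≤ β e₀ k)
    (π : Finset (Fin n_y) → ℕ → ℝ)
    (hπ : ∀ (J : Finset (Fin n_y)) (k : ℕ), J.card = n_y - q →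
      π J k = sSup {r : ℝ | ∃ S : Finset (Fin n_y),
        S ⊆ J ∧ S.card = n_y - 2 * q ∧ r = ‖xhat J k - xhat S k‖})
    (σ : ℕ → Finset (Fin n_y))
    (hσcard : ∀ k : ℕ, (σ k).card = n_y - q)
    (hσmin : ∀ (k : ℕ) (J : Finset (Fin n_y)), J.card = n_y - q →
      π (σ k) k ≤ π J k) :
    ∃ βbar : ℝ → ℕ → ℝ, IsClassKL βbar ∧
      ∀ k : ℕ, ‖xhat (σ k) k - x k‖ ≤ βbar e₀ k := by
  classical
  -- a default class-KL function
  have hdef : IsClassKL (fun r k => r * (1/2 : ℝ)^k) := by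
    constructor
    · intro k
      refine ⟨(continuous_id.mul continuous_const).continuousOn, ?_, by simp⟩
      intro a _ b _ hab
      exact mul_lt_mul_of_pos_right hab (by positivity)
    · intro r hr
      constructor
      · intro k1 k2 h
        exact mul_le_mul_of_nonneg_left
          (pow_le_pow_of_le_one (by norm_num) (by norm_num) h) hr
      · have := (tendsto_pow_atTop_nhds_zero_of_lt_one (by norm_num : (0:ℝ) ≤ 1/2)
          (by norm_num)).const_mul r
        simpa using this
  -- choose a KL bound for every J (default when hypothesis doesn't apply)
  have hβ : ∀ J : Finset (Fin n_y), ∃ β : ℝ → ℕ → ℝ, IsClassKL β ∧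
      (((J.card = n_y - q ∨ J.card = n_y - 2 * q) ∧ J ∩ W = ∅) →
        ∀ k : ℕ, ‖xhat J k - x k‖ ≤ β e₀ k) := by
    intro J
    by_cases h : (J.card = n_y - q ∨ J.card = n_y - 2 * q) ∧ J ∩ W = ∅
    · obtain ⟨β, hβ1, hβ2⟩ := hstable J h.1 h.2
      exact ⟨β, hβ1, fun _ => hβ2⟩
    · exact ⟨_, hdef, fun h' => absurd h' h⟩
  choose β hβKL hβbd using hβ
  -- the index set of admissible attack-free observers
  set 𝒥 : Finset (Finset (Fin n_y)) :=
    Finset.univ.filter (fun J => (J.card = n_y - q ∨ J.card = n_y - 2 * q) ∧ J ∩ W = ∅)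
    with h𝒥
  have hmem𝒥 : ∀ J : Finset (Fin n_y),
      J ∈ 𝒥 ↔ (J.card = n_y - q ∨ J.card = n_y - 2 * q) ∧ J ∩ W = ∅ := by
    intro J; simp [h𝒥]
  -- an attack-free J of cardinality n_y - q exists
  have hnq : n_y - q ≤ Wᶜ.card := by
    have : Wᶜ.card = n_y - W.card := by
      simp [Finset.card_compl]
    rw [this]
    exact Nat.sub_le_sub_left hW n_y
  obtain ⟨J₀, hJ₀sub, hJ₀card⟩ := Finset.exists_subset_card_eq hnq
  have hdisj : ∀ J : Finset (Fin n_y), J ⊆ Wᶜ → J ∩ W = ∅ := by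
    intro J hJ
    rw [← Finset.disjoint_iff_inter_eq_empty]
    exact Finset.disjoint_left.2 fun a ha haW => (Finset.mem_compl.1 (hJ ha)) haW
  have hJ₀mem : J₀ ∈ 𝒥 := (hmem𝒥 J₀).2 ⟨Or.inl hJ₀card, hdisj _ hJ₀sub⟩
  have h𝒥ne : 𝒥.Nonempty := ⟨J₀, hJ₀mem⟩
  refine ⟨fun r k => 3 * ∑ J ∈ 𝒥, β J r k, ?_, ?_⟩
  · constructor
    · intro k
      refine ⟨?_, ?_, ?_⟩
      · exact continuousOn_const.mul (continuousOn_finset_sum 𝒥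
          (fun J _ => ((hβKL J).1 k).1))
      · intro a ha b hb hab
        have : ∑ J ∈ 𝒥, β J a k < ∑ J ∈ 𝒥, β J b k :=
          Finset.sum_lt_sum_of_nonempty h𝒥ne
            (fun J _ => ((hβKL J).1 k).2.1 ha hb hab)
        simpa using mul_lt_mul_of_pos_left this (by norm_num : (0:ℝ) < 3)
      · simp [fun J => ((hβKL J).1 k).2.2]
    · intro r hr
      constructor
      · intro k1 k2 h
        have : ∑ J ∈ 𝒥, β J r k2 ≤ ∑ J ∈ 𝒥, β J r k1 :=
          Finset.sum_le_sum (fun J _ => ((hβKL J).2 r hr).1 h)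
        simpa using mul_le_mul_of_nonneg_left this (by norm_num : (0:ℝ) ≤ 3)
      · have : Filter.Tendsto (fun k => ∑ J ∈ 𝒥, β J r k) Filter.atTop (nhds 0) := by
          have := tendsto_finset_sum 𝒥 (fun J _ => ((hβKL J).2 r hr).2)
          simpa using this
        simpa using this.const_mul (3:ℝ)
  · -- the bound
    intro k
    -- e₀ is nonnegative
    have he₀set : {r : ℝ | ∃ J : Finset (Fin n_y),
        (J.card = n_y - q ∨ J.card = n_y - 2 * q) ∧ r = ‖xhat J 0 - x 0‖} =
        (fun J => ‖xhat J 0 - x 0‖) '' {J | J.card = n_y - q ∨ J.card = n_y - 2 * q} := by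
      ext r; simp [eq_comm, and_comm]
    have he₀bdd : BddAbove {r : ℝ | ∃ J : Finset (Fin n_y),
        (J.card = n_y - q ∨ J.card = n_y - 2 * q) ∧ r = ‖xhat J 0 - x 0‖} := by
      rw [he₀set]
      exact (Set.toFinite _).image _ |>.bddAbove
    have he₀0 : 0 ≤ e₀ := by
      have : ‖xhat J₀ 0 - x 0‖ ≤ e₀ := by
        rw [he₀]
        exact le_csSup he₀bdd ⟨J₀, Or.inl hJ₀card, rfl⟩
      exact le_trans (norm_nonneg _) this
    -- each β J e₀ k is nonnegative
    have hβnn : ∀ J : Finset (Fin n_y), 0 ≤ β J e₀ k := by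
      intro J
      have h0 : β J 0 k = 0 := ((hβKL J).1 k).2.2
      rcases eq_or_lt_of_le he₀0 with h | h
      · rw [← h, h0]
      · have := ((hβKL J).1 k).2.1 (Set.self_mem_Ici) (le_of_lt h) h
        rw [← h0]; exact le_of_lt this
    set B : ℝ := ∑ J ∈ 𝒥, β J e₀ k with hB
    have hle : ∀ J ∈ 𝒥, β J e₀ k ≤ B :=
      fun J hJ => Finset.single_le_sum (fun J _ => hβnn J) hJ
    -- bound for attack-free observers
    have hfree : ∀ J ∈ 𝒥, ‖xhat J k - x k‖ ≤ B := by
      intro J hJ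
      exact le_trans (hβbd J ((hmem𝒥 J).1 hJ) k) (hle J hJ)
    -- q ≤ 2 * q needed for card chains
    have h2q : n_y - 2 * q ≤ n_y - q :=
      Nat.sub_le_sub_left (Nat.le_mul_of_pos_left q (by norm_num)) n_y
    -- bound π J₀ k ≤ 2 * B
    have hπJ₀ : π J₀ k ≤ 2 * B := by
      rw [hπ J₀ k hJ₀card]
      have hne : ∃ S : Finset (Fin n_y), S ⊆ J₀ ∧ S.card = n_y - 2 * q := by
        obtain ⟨S, hS1, hS2⟩ := Finset.exists_subset_card_eq (hJ₀card ▸ h2q)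
        exact ⟨S, hS1, hS2⟩
      obtain ⟨S₀, hS₀1, hS₀2⟩ := hne
      refine csSup_le ?_ ?_
      · exact ⟨‖xhat J₀ k - xhat S₀ k‖, S₀, hS₀1, hS₀2, rfl⟩
      rintro r ⟨S, hS1, hS2, rfl⟩
      have hSmem : S ∈ 𝒥 := (hmem𝒥 S).2 ⟨Or.inr hS2, hdisj S (hS1.trans hJ₀sub)⟩
      calc ‖xhat J₀ k - xhat S k‖ ≤ ‖xhat J₀ k - x k‖ + ‖x k - xhat S k‖ :=
            norm_sub_le_norm_sub_add_norm_sub _ _ _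
        _ ≤ B + B := by
            refine add_le_add (hfree J₀ hJ₀mem) ?_
            rw [norm_sub_rev]; exact hfree S hSmem
        _ = 2 * B := by ring
    -- attack-free subset of σ k
    have hσdiff : n_y - 2 * q ≤ ((σ k) \ W).card := by
      have hc : (σ k).card - W.card ≤ ((σ k) \ W).card := Finset.le_card_sdiff W (σ k)
      have hck := hσcard k
      omega
    obtain ⟨Sst, hSstsub, hSstcard⟩ := Finset.exists_subset_card_eq hσdiff
    have hSstσ : Sst ⊆ σ k := hSstsub.trans (Finset.sdiff_subset)
    have hSstmem : Sst ∈ 𝒥 := by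
      refine (hmem𝒥 Sst).2 ⟨Or.inr hSstcard, ?_⟩
      rw [← Finset.disjoint_iff_inter_eq_empty]
      exact Finset.disjoint_left.2 fun a ha haW =>
        (Finset.mem_sdiff.1 (hSstsub ha)).2 haW
    -- ‖xhat σk - xhat Sst‖ ≤ π (σ k) k
    have hπσset : {r : ℝ | ∃ S : Finset (Fin n_y),
        S ⊆ σ k ∧ S.card = n_y - 2 * q ∧ r = ‖xhat (σ k) k - xhat S k‖} =
        (fun S => ‖xhat (σ k) k - xhat S k‖) '' {S | S ⊆ σ k ∧ S.card = n_y - 2 * q} := by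
      ext r; constructor
      · rintro ⟨S, h1', h2', h3'⟩; exact ⟨S, ⟨h1', h2'⟩, h3'.symm⟩
      · rintro ⟨S, ⟨h1', h2'⟩, h3'⟩; exact ⟨S, h1', h2', h3'.symm⟩
    have hπσ : ‖xhat (σ k) k - xhat Sst k‖ ≤ π (σ k) k := by
      rw [hπ (σ k) k (hσcard k)]
      refine le_csSup ?_ ⟨Sst, hSstσ, hSstcard, rfl⟩
      rw [hπσset]
      exact (Set.toFinite _).image _ |>.bddAbove
    calc ‖xhat (σ k) k - x k‖
        ≤ ‖xhat (σ k) k - xhat Sst k‖ + ‖xhat Sst k - x k‖ :=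
          norm_sub_le_norm_sub_add_norm_sub _ _ _
      _ ≤ π (σ k) k + B := add_le_add hπσ (hfree Sst hSstmem)
      _ ≤ π J₀ k + B := add_le_add_left (hσmin k J₀ hJ₀card) _
      _ ≤ 2 * B + B := add_le_add_left hπJ₀ _
      _ = 3 * B := by ring
end

section
/- Let n, n_u, n_y, q₁, q₂ be natural numbers with 2q₁ < n_u and n_y - 2q₂ > 0. Let W_u ⊆ {1, ..., n_u} with card(W_u) ≤ q₁ and W_y ⊆ {1, ..., n_y} with card(W_y) ≤ q₂. Let x : ℕ → ℝⁿ be the true state trajectory, and for each pair (J_u, J_s) of subsets of {1, ..., n_u} and {1, ..., n_y} respectively with either (card(J_u) = q₁ and card(J_s) = n_y - q₂) or (card(J_u) = 2q₁ and card(J_s) = n_y - 2q₂), let x̂_{(J_u,J_s)} : ℕ → ℝⁿ be an estimate trajectory. Set e₀ = max over all such pairs of ‖x̂_{(J_u,J_s)}(0) - x(0)‖ (Euclidean norm). Assume that for every such pair with W_u ⊆ J_u and J_s ∩ W_y = ∅ there exists a class-KL function β_{(J_u,J_s)} such that ‖x̂_{(J_u,J_s)}(k) - x(k)‖ ≤ β_{(J_u,J_s)}(e₀,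 k) for all k ∈ ℕ. For each pair (J_u, J_s) with card(J_u) = q₁ and card(J_s) = n_y - q₂ define π_{(J_u,J_s)}(k) = max over all pairs (S_u, S_s) with J_u ⊆ S_u, card(S_u) = 2q₁, S_s ⊆ J_s, card(S_s) = n_y - 2q₂ of ‖x̂_{(J_u,J_s)}(k) - x̂_{(S_u,S_s)}(k)‖, and let (σ_u(k), σ_s(k)) be any selection with card(σ_u(k)) = q₁, card(σ_s(k)) = n_y - q₂, and π_{(σ_u(k),σ_s(k))}(k) ≤ π_{(J_u,J_s)}(k) for every such pair (J_u, J_s). Then there exists a class-KL function β̄ such that ‖x̂_{(σ_u(k),σ_s(k))}(k) - x(k)‖ ≤ β̄(e₀, k) for all k ∈ ℕ. -/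
/-- Theorem 2 of the paper: the partial multi-observer estimator
`x̂(k) = x̂_{(σ_u(k), σ_s(k))}(k)`, where `(σ_u(k), σ_s(k))` minimizes the deviation
statistic `π` over all admissible pairs, has asymptotically stable estimation error
despite actuator and sensor attacks. -/
theorem partial_multiobserver_estimator_KL_bound
    (n n_u n_y q₁ q₂ : ℕ) (h1 : 2 * q₁ < n_u) (h2 : 0 < n_y - 2 * q₂)
    (Wu : Finset (Fin n_u)) (hWu : Wu.card ≤ q₁)
    (Wy : Finset (Fin n_y)) (hWy : Wy.card ≤ q₂)
    (x : ℕ → EuclideanSpace ℝ (Fin n))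
    (xhat : Finset (Fin n_u) → Finset (Fin n_y) → ℕ → EuclideanSpace ℝ (Fin n))
    (e₀ : ℝ)
    (he₀ : e₀ = sSup {r : ℝ | ∃ (Ju : Finset (Fin n_u)) (Js : Finset (Fin n_y)),
      ((Ju.card = q₁ ∧ Js.card = n_y - q₂) ∨
        (Ju.card = 2 * q₁ ∧ Js.card = n_y - 2 * q₂)) ∧ r = ‖xhat Ju Js 0 - x 0‖})
    (hstable : ∀ (Ju : Finset (Fin n_u)) (Js : Finset (Fin n_y)),
      ((Ju.card = q₁ ∧ Js.card = n_y - q₂) ∨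
        (Ju.card = 2 * q₁ ∧ Js.card = n_y - 2 * q₂)) →
      Wu ⊆ Ju → Js ∩ Wy = ∅ →
      ∃ β : ℝ → ℕ → ℝ, IsClassKL β ∧ ∀ k : ℕ, ‖xhat Ju Js k - x k‖ ≤ β e₀ k)
    (π : Finset (Fin n_u) → Finset (Fin n_y) → ℕ → ℝ)
    (hπ : ∀ (Ju : Finset (Fin n_u)) (Js : Finset (Fin n_y)) (k : ℕ),
      Ju.card = q₁ → Js.card = n_y - q₂ →
      π Ju Js k = sSup {r : ℝ | ∃ (Su : Finset (Fin n_u)) (Ss : Finset (Fin n_y)),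
        Ju ⊆ Su ∧ Su.card = 2 * q₁ ∧ Ss ⊆ Js ∧ Ss.card = n_y - 2 * q₂ ∧
        r = ‖xhat Ju Js k - xhat Su Ss k‖})
    (σu : ℕ → Finset (Fin n_u)) (σs : ℕ → Finset (Fin n_y))
    (hσcard : ∀ k : ℕ, (σu k).card = q₁ ∧ (σs k).card = n_y - q₂)
    (hσmin : ∀ (k : ℕ) (Ju : Finset (Fin n_u)) (Js : Finset (Fin n_y)),
      Ju.card = q₁ → Js.card = n_y - q₂ → π (σu k) (σs k) k ≤ π Ju Js k) :
    ∃ βbar : ℝ → ℕ → ℝ, IsClassKL βbar ∧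
      ∀ k : ℕ, ‖xhat (σu k) (σs k) k - x k‖ ≤ βbar e₀ k := by
  classical
  have hq1 : q₁ ≤ n_u := by omega
  have h2q1 : 2 * q₁ ≤ n_u := by omega
  -- the "good" pairs: admissible cardinality, cover attacked actuators, avoid attacked sensors
  set Good : Finset (Fin n_u) × Finset (Fin n_y) → Prop := fun p =>
    ((p.1.card = q₁ ∧ p.2.card = n_y - q₂) ∨
      (p.1.card = 2 * q₁ ∧ p.2.card = n_y - 2 * q₂)) ∧ Wu ⊆ p.1 ∧ p.2 ∩ Wy = ∅ with hGoodDef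
  -- choose a class-KL bound for each good pair
  obtain ⟨B, hB⟩ : ∃ B : Finset (Fin n_u) × Finset (Fin n_y) → ℝ → ℕ → ℝ,
      ∀ p, Good p → IsClassKL (B p) ∧ ∀ k, ‖xhat p.1 p.2 k - x k‖ ≤ B p e₀ k := by
    refine ⟨fun p => if h : Good p then (hstable p.1 p.2 h.1 h.2.1 h.2.2).choose
      else fun _ _ => 0, fun p hp => ?_⟩
    simp only [dif_pos hp]
    exact (hstable p.1 p.2 hp.1 hp.2.1 hp.2.2).choose_spec
  set P : Finset (Finset (Fin n_u) × Finset (Fin n_y)) :=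
    Finset.univ.filter Good with hPdef
  have hmemP : ∀ p, p ∈ P → Good p := fun p hp => (Finset.mem_filter.mp hp).2
  have hmemP' : ∀ p, Good p → p ∈ P := fun p hp =>
    Finset.mem_filter.mpr ⟨Finset.mem_univ _, hp⟩
  set S : ℝ → ℕ → ℝ := fun r k => ∑ p ∈ P, B p r k with hSdef
  -- basic properties of S
  have hS0 : ∀ k, S 0 k = 0 := by
    intro k
    refine Finset.sum_eq_zero fun p hp => ?_
    exact ((hB p (hmemP p hp)).1.1 k).2.2
  have hSmono : ∀ k, MonotoneOn (fun r => S r k) (Set.Ici (0 : ℝ)) := by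
    intro k a ha b hb hab
    exact Finset.sum_le_sum fun p hp =>
      ((hB p (hmemP p hp)).1.1 k).2.1.monotoneOn ha hb hab
  have hSnonneg : ∀ r, 0 ≤ r → ∀ k, 0 ≤ S r k := by
    intro r hr k
    have := hSmono k (Set.mem_Ici.mpr le_rfl) (Set.mem_Ici.mpr hr) hr
    simpa [hS0 k] using this
  have hScont : ∀ k, ContinuousOn (fun r => S r k) (Set.Ici (0 : ℝ)) := by
    intro k
    exact continuousOn_finset_sum P fun p hp => ((hB p (hmemP p hp)).1.1 k).1
  have hSanti : ∀ r, 0 ≤ r → Antitone (fun k => S r k) := by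
    intro r hr k1 k2 h
    exact Finset.sum_le_sum fun p hp => ((hB p (hmemP p hp)).1.2 r hr).1 h
  have hStend : ∀ r, 0 ≤ r →
      Filter.Tendsto (fun k => S r k) Filter.atTop (nhds 0) := by
    intro r hr
    have : Filter.Tendsto (fun k => ∑ p ∈ P, B p r k) Filter.atTop
        (nhds (∑ p ∈ P, (0 : ℝ))) :=
      tendsto_finset_sum P fun p hp => ((hB p (hmemP p hp)).1.2 r hr).2
    simpa using this
  -- the candidate class-KL function
  refine ⟨fun r k => 3 * S r k + r * (1/2 : ℝ) ^ k, ⟨?_, ?_⟩, ?_⟩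
  · intro k
    refine ⟨?_, ?_, ?_⟩
    · exact ((continuousOn_const.mul (hScont k)).add
        (continuousOn_id.mul continuousOn_const))
    · intro a ha b hb hab
      have h1 : S a k ≤ S b k := hSmono k ha hb hab.le
      have h2 : a * (1/2 : ℝ) ^ k < b * (1/2 : ℝ) ^ k :=
        mul_lt_mul_of_pos_right hab (by positivity)
      dsimp only
      linarith
    · simp [hS0 k]
  · intro r hr
    constructor
    · intro k1 k2 h
      have h1 : S r k2 ≤ S r k1 := hSanti r hr h
      have h2 : r * (1/2 : ℝ) ^ k2 ≤ r * (1/2 : ℝ) ^ k1 :=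
        mul_le_mul_of_nonneg_left
          (pow_le_pow_of_le_one (by norm_num) (by norm_num) h) hr
      dsimp only
      linarith
    · have t1 : Filter.Tendsto (fun k => 3 * S r k) Filter.atTop (nhds (3 * 0)) :=
        (hStend r hr).const_mul 3
      have t2 : Filter.Tendsto (fun k => r * (1/2 : ℝ) ^ k) Filter.atTop
          (nhds (r * 0)) :=
        (tendsto_pow_atTop_nhds_zero_of_lt_one (by norm_num) (by norm_num)).const_mul r
      have := t1.add t2
      simpa using this
  -- the quantitative bound
  · -- first, a reference good pair of the first kind
    obtain ⟨Ju, hWuJu, hJuCard⟩ :=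
      Finset.exists_superset_card_eq (n := q₁) hWu (by simpa using hq1)
    obtain ⟨Js, hJsSub, hJsCard⟩ :=
      Finset.exists_subset_card_eq (s := Wyᶜ) (n := n_y - q₂)
        (by
          rw [Finset.card_compl, Fintype.card_fin]
          exact Nat.sub_le_sub_left hWy n_y)
    have hJsWy : Js ∩ Wy = ∅ :=
      Finset.disjoint_iff_inter_eq_empty.mp
        (Finset.disjoint_left.mpr fun a ha hWya =>
          (Finset.mem_compl.mp (hJsSub ha)) hWya)
    have hGoodJ : Good (Ju, Js) := ⟨Or.inl ⟨hJuCard, hJsCard⟩, hWuJu, hJsWy⟩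
    -- e₀ is nonnegative
    have he₀nonneg : 0 ≤ e₀ := by
      rw [he₀]
      have hfin : ({r : ℝ | ∃ (Ju' : Finset (Fin n_u)) (Js' : Finset (Fin n_y)),
          ((Ju'.card = q₁ ∧ Js'.card = n_y - q₂) ∨
            (Ju'.card = 2 * q₁ ∧ Js'.card = n_y - 2 * q₂)) ∧
          r = ‖xhat Ju' Js' 0 - x 0‖}).Finite := by
        apply Set.Finite.subset (Set.finite_range
          (fun p : Finset (Fin n_u) × Finset (Fin n_y) => ‖xhat p.1 p.2 0 - x 0‖))
        rintro r ⟨Ju', Js', -, rfl⟩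
        exact ⟨(Ju', Js'), rfl⟩
      refine le_trans (norm_nonneg (xhat Ju Js 0 - x 0)) (le_csSup hfin.bddAbove ?_)
      exact ⟨Ju, Js, Or.inl ⟨hJuCard, hJsCard⟩, rfl⟩
    have hBnonneg : ∀ p ∈ P, ∀ k, 0 ≤ B p e₀ k := by
      intro p hp k
      have h0 := ((hB p (hmemP p hp)).1.1 k).2.2
      have := ((hB p (hmemP p hp)).1.1 k).2.1.monotoneOn
        (Set.mem_Ici.mpr le_rfl) (Set.mem_Ici.mpr he₀nonneg) he₀nonneg
      simpa [h0] using this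
    have hBle : ∀ p ∈ P, ∀ k, B p e₀ k ≤ S e₀ k := fun p hp k =>
      Finset.single_le_sum (fun q hq => hBnonneg q hq k) hp
    intro k
    -- build the big pair (Su, Ss) covering σ and the attack sets
    obtain ⟨Su, hSuSub, hSuCard⟩ :=
      Finset.exists_superset_card_eq (n := 2 * q₁) (s := σu k ∪ Wu)
        (le_trans (Finset.card_union_le _ _)
          (by have := (hσcard k).1; omega))
        (by simpa using h2q1)
    obtain ⟨Ss, hSsSub, hSsCard⟩ :=
      Finset.exists_subset_card_eq (s := σs k \ Wy) (n := n_y - 2 * q₂)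
        (by
          have h3 := Finset.le_card_sdiff Wy (σs k)
          have h4 := (hσcard k).2
          omega)
    have hSsWy : Ss ∩ Wy = ∅ :=
      Finset.disjoint_iff_inter_eq_empty.mp
        (Finset.disjoint_of_subset_left hSsSub Finset.sdiff_disjoint)
    have hGoodS : Good (Su, Ss) :=
      ⟨Or.inr ⟨hSuCard, hSsCard⟩,
        (Finset.subset_union_right).trans hSuSub, hSsWy⟩
    -- π (σu k) (σs k) k dominates the distance to (Su, Ss)
    have hbound1 : ‖xhat (σu k) (σs k) k - xhat Su Ss k‖ ≤ π (σu k) (σs k) k := by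
      rw [hπ (σu k) (σs k) k (hσcard k).1 (hσcard k).2]
      have hfin : ({r : ℝ | ∃ (Su' : Finset (Fin n_u)) (Ss' : Finset (Fin n_y)),
          σu k ⊆ Su' ∧ Su'.card = 2 * q₁ ∧ Ss' ⊆ σs k ∧ Ss'.card = n_y - 2 * q₂ ∧
          r = ‖xhat (σu k) (σs k) k - xhat Su' Ss' k‖}).Finite := by
        apply Set.Finite.subset (Set.finite_range
          (fun p : Finset (Fin n_u) × Finset (Fin n_y) =>
            ‖xhat (σu k) (σs k) k - xhat p.1 p.2 k‖))
        rintro r ⟨Su', Ss', -, -, -, -, rfl⟩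
        exact ⟨(Su', Ss'), rfl⟩
      refine le_csSup hfin.bddAbove ?_
      exact ⟨Su, Ss, (Finset.subset_union_left).trans hSuSub, hSuCard,
        hSsSub.trans (Finset.sdiff_subset), hSsCard, rfl⟩
    -- π at the reference pair is small
    have hbound3 : π Ju Js k ≤ 2 * S e₀ k := by
      rw [hπ Ju Js k hJuCard hJsCard]
      refine Real.sSup_le ?_ (by have := hSnonneg e₀ he₀nonneg k; linarith)
      rintro r ⟨Su', Ss', hJuSu', hSu'Card, hSs'Js, hSs'Card, rfl⟩
      have hSs'Wy : Ss' ∩ Wy = ∅ :=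
        Finset.disjoint_iff_inter_eq_empty.mp
          (Finset.disjoint_left.mpr fun a ha hWya =>
            (Finset.mem_compl.mp (hJsSub (hSs'Js ha))) hWya)
      have hGoodS' : Good (Su', Ss') :=
        ⟨Or.inr ⟨hSu'Card, hSs'Card⟩, hWuJu.trans hJuSu', hSs'Wy⟩
      have h5 : ‖xhat Ju Js k - xhat Su' Ss' k‖ ≤
          ‖xhat Ju Js k - x k‖ + ‖x k - xhat Su' Ss' k‖ :=
        norm_sub_le_norm_sub_add_norm_sub _ _ _
      have h6 : ‖xhat Ju Js k - x k‖ ≤ B (Ju, Js) e₀ k := (hB _ hGoodJ).2 k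
      have h7 : ‖x k - xhat Su' Ss' k‖ ≤ B (Su', Ss') e₀ k := by
        rw [norm_sub_rev]
        exact (hB _ hGoodS').2 k
      have h8 := hBle _ (hmemP' _ hGoodJ) k
      have h9 := hBle _ (hmemP' _ hGoodS') k
      linarith
    have hbound2 : π (σu k) (σs k) k ≤ π Ju Js k := hσmin k Ju Js hJuCard hJsCard
    have hbound4 : ‖xhat Su Ss k - x k‖ ≤ S e₀ k :=
      le_trans ((hB _ hGoodS).2 k) (hBle _ (hmemP' _ hGoodS) k)
    have htri : ‖xhat (σu k) (σs k) k - x k‖ ≤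
        ‖xhat (σu k) (σs k) k - xhat Su Ss k‖ + ‖xhat Su Ss k - x k‖ :=
      norm_sub_le_norm_sub_add_norm_sub _ _ _
    have hlast : 0 ≤ e₀ * (1/2 : ℝ) ^ k := by positivity
    dsimp only
    linarith
end

section
/- Let n, n_u be natural numbers, A an n × n real matrix, B an n × n_u real matrix, and L an n_u × n real matrix with L · B = I (the n_u × n_u identity), and let f : ℝⁿ → ℝⁿ be Lipschitz continuous with some constant γ ≥ 0 with respect to the Euclidean norm. Let x, x̂ : ℕ → ℝⁿ and u, a_u : ℕ → ℝ^{n_u} satisfy x(k+1) = A·x(k) + f(x(k)) + B·(u(k) + a_u(k)) for all k ∈ ℕ, and suppose x̂(k) - x(k) → 0 as k → ∞. Define â_u(k+1) = L·(x̂(k+1) - A·x̂(k) - f(x̂(k))) - u(k). Then â_u(k+1) - a_u(k) → 0 as k → ∞. -/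
/-- Actuator attack reconstruction (Section III of the paper): given any asymptotically
correct state estimate `x̂` of the Lipschitz nonlinear system
`x⁺ = A x + f(x) + B (u + a_u)`, the formula
`â_u(k+1) = L (x̂(k+1) - A x̂(k) - f(x̂(k))) - u(k)`, with `L` a left inverse of the
full-column-rank matrix `B`, asymptotically reconstructs the actuator attack signal
with one-step delay. -/
theorem actuator_attack_asymptotic_reconstruction
    (n n_u : ℕ)
    (A : Matrix (Fin n) (Fin n) ℝ) (B : Matrix (Fin n) (Fin n_u) ℝ)
    (L : Matrix (Fin n_u) (Fin n) ℝ) (hLB : L * B = 1)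
    (f : EuclideanSpace ℝ (Fin n) → EuclideanSpace ℝ (Fin n))
    (γ : ℝ) (hγ : 0 ≤ γ)
    (hf : ∀ x₁ x₂ : EuclideanSpace ℝ (Fin n), ‖f x₁ - f x₂‖ ≤ γ * ‖x₁ - x₂‖)
    (x xhat : ℕ → EuclideanSpace ℝ (Fin n))
    (u a_u : ℕ → EuclideanSpace ℝ (Fin n_u))
    (hdyn : ∀ k : ℕ, x (k + 1) =
      Matrix.toEuclideanLin A (x k) + f (x k) + Matrix.toEuclideanLin B (u k + a_u k))
    (hconv : Filter.Tendsto (fun k : ℕ => xhat k - x k) Filter.atTop (nhds 0))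
    (ahat_u : ℕ → EuclideanSpace ℝ (Fin n_u))
    (hahat : ∀ k : ℕ, ahat_u (k + 1) =
      Matrix.toEuclideanLin L
        (xhat (k + 1) - Matrix.toEuclideanLin A (xhat k) - f (xhat k)) - u k) :
    Filter.Tendsto (fun k : ℕ => ahat_u (k + 1) - a_u k) Filter.atTop (nhds 0) := by
  set T : Matrix (Fin n) (Fin n) ℝ → (EuclideanSpace ℝ (Fin n) →ₗ[ℝ] EuclideanSpace ℝ (Fin n)) :=
    fun M => Matrix.toEuclideanLin M with hT
  -- error sequence
  have he : Filter.Tendsto (fun k : ℕ => xhat k - x k) Filter.atTop (nhds 0) := hconv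
  have he1 : Filter.Tendsto (fun k : ℕ => xhat (k + 1) - x (k + 1)) Filter.atTop (nhds 0) :=
    he.comp (Filter.tendsto_add_atTop_nat 1)
  have hAcont : Continuous (Matrix.toEuclideanLin A : EuclideanSpace ℝ (Fin n) →ₗ[ℝ] _) :=
    LinearMap.continuous_of_finiteDimensional _
  have hLcont : Continuous (Matrix.toEuclideanLin L : EuclideanSpace ℝ (Fin n) →ₗ[ℝ] _) :=
    LinearMap.continuous_of_finiteDimensional _
  have hAe : Filter.Tendsto (fun k : ℕ => Matrix.toEuclideanLin A (xhat k - x k))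
      Filter.atTop (nhds 0) := by
    have := (hAcont.tendsto 0).comp he
    simpa only [Function.comp_def, map_zero] using this
  have hfd : Filter.Tendsto (fun k : ℕ => f (xhat k) - f (x k)) Filter.atTop (nhds 0) := by
    apply squeeze_zero_norm (fun k => hf (xhat k) (x k))
    have : Filter.Tendsto (fun k : ℕ => ‖xhat k - x k‖) Filter.atTop (nhds 0) := by
      simpa using he.norm
    simpa using this.const_mul γ
  have hsum : Filter.Tendsto
      (fun k : ℕ => (xhat (k + 1) - x (k + 1)) - Matrix.toEuclideanLin A (xhat k - x k)
        - (f (xhat k) - f (x k))) Filter.atTop (nhds 0) := by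
    have := (he1.sub hAe).sub hfd
    simpa using this
  have hL : Filter.Tendsto
      (fun k : ℕ => Matrix.toEuclideanLin L ((xhat (k + 1) - x (k + 1))
        - Matrix.toEuclideanLin A (xhat k - x k) - (f (xhat k) - f (x k))))
      Filter.atTop (nhds 0) := by
    have := (hLcont.tendsto 0).comp hsum
    simpa only [Function.comp_def, map_zero] using this
  have key : ∀ k : ℕ, ahat_u (k + 1) - a_u k =
      Matrix.toEuclideanLin L ((xhat (k + 1) - x (k + 1))
        - Matrix.toEuclideanLin A (xhat k - x k) - (f (xhat k) - f (x k))) := by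
    intro k
    have hLB' : ∀ v : EuclideanSpace ℝ (Fin n_u),
        Matrix.toEuclideanLin L (Matrix.toEuclideanLin B v) = v := by
      intro v
      apply (WithLp.equiv 2 (Fin n_u → ℝ)).injective
      simp [Matrix.mulVec_mulVec, hLB]
    rw [hahat k, hdyn k]
    simp only [map_sub, map_add, hLB']
    abel
  rw [show (fun k : ℕ => ahat_u (k + 1) - a_u k) = _ from funext key]
  exact hL
end

section
/- Let n, n_u be natural numbers, A an n × n real matrix, B an n × n_u real matrix, and L an n_u × n real matrix with L · B = I, and let f : ℝⁿ → ℝⁿ be Lipschitz continuous with some constant γ ≥ 0 with respect to the Euclidean norm. Let x, x̂ : ℕ → ℝⁿ and u, a_u : ℕ → ℝ^{n_u} satisfy x(k+1) = A·x(k) + f(x(k)) + B·(u(k) + a_u(k)) for all k ∈ ℕ, and suppose x̂(k) - x(k) → 0 as k → ∞. Let W_u ⊆ {1, ..., n_u} and suppose that for every k ∈ ℕ and every i ∉ W_u, the i-th component of a_u(k) is zero. Define â_u(k+1) = L·(x̂(k+1) - A·x̂(k) - f(x̂(k))) - u(k). Then for every i ∉ W_u, the i-th component of â_u(k) tends to 0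 as k → ∞. -/
open Filter

private lemma LB_cancel {n n_u : ℕ} (B : Matrix (Fin n) (Fin n_u) ℝ)
    (L : Matrix (Fin n_u) (Fin n) ℝ) (hLB : L * B = 1)
    (w : EuclideanSpace ℝ (Fin n_u)) :
    Matrix.toEuclideanLin L (Matrix.toEuclideanLin B w) = w := by
  simp only [Matrix.toEuclideanLin_apply]
  simp [Matrix.mulVec_mulVec, hLB]

/-- Actuator attack isolation (equation (30) of the paper): if `supp(a_u(k)) ⊆ W_u`
for all `k` and the state estimate is asymptotically correct, then the components of
the reconstructed actuator attack
`â_u(k+1) = L (x̂(k+1) - A x̂(k) - f(x̂(k))) - u(k)` corresponding to attack-free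
actuators vanish asymptotically. -/
theorem actuator_attack_isolation
    (n n_u : ℕ)
    (A : Matrix (Fin n) (Fin n) ℝ) (B : Matrix (Fin n) (Fin n_u) ℝ)
    (L : Matrix (Fin n_u) (Fin n) ℝ) (hLB : L * B = 1)
    (f : EuclideanSpace ℝ (Fin n) → EuclideanSpace ℝ (Fin n))
    (γ : ℝ) (hγ : 0 ≤ γ)
    (hf : ∀ x₁ x₂ : EuclideanSpace ℝ (Fin n), ‖f x₁ - f x₂‖ ≤ γ * ‖x₁ - x₂‖)
    (x xhat : ℕ → EuclideanSpace ℝ (Fin n))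
    (u a_u : ℕ → EuclideanSpace ℝ (Fin n_u))
    (hdyn : ∀ k : ℕ, x (k + 1) =
      Matrix.toEuclideanLin A (x k) + f (x k) + Matrix.toEuclideanLin B (u k + a_u k))
    (hconv : Filter.Tendsto (fun k : ℕ => xhat k - x k) Filter.atTop (nhds 0))
    (W_u : Finset (Fin n_u))
    (hsupp : ∀ k : ℕ, ∀ i : Fin n_u, i ∉ W_u → a_u k i = 0)
    (ahat_u : ℕ → EuclideanSpace ℝ (Fin n_u))
    (hahat : ∀ k : ℕ, ahat_u (k + 1) =
      Matrix.toEuclideanLin L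
        (xhat (k + 1) - Matrix.toEuclideanLin A (xhat k) - f (xhat k)) - u k) :
    ∀ i : Fin n_u, i ∉ W_u →
      Filter.Tendsto (fun k : ℕ => ahat_u k i) Filter.atTop (nhds 0) := by
  intro i hi
  set e : ℕ → EuclideanSpace ℝ (Fin n) := fun k => xhat k - x k with he
  -- e (k+1) tends to 0
  have he1 : Tendsto (fun k : ℕ => e (k + 1)) atTop (nhds 0) :=
    hconv.comp (tendsto_add_atTop_nat 1)
  -- A e k tends to 0
  have hA : Tendsto (fun k : ℕ => Matrix.toEuclideanLin A (e k)) atTop (nhds 0) := by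
    have hc : Continuous (Matrix.toEuclideanLin A) :=
      (Matrix.toEuclideanLin A).continuous_of_finiteDimensional
    have := (hc.tendsto 0).comp hconv
    simpa [Function.comp_def] using this
  -- f xhat - f x tends to 0
  have hne : Tendsto (fun k : ℕ => ‖e k‖) atTop (nhds 0) := by
    simpa [Function.comp_def] using (continuous_norm.tendsto (0 : EuclideanSpace ℝ (Fin n))).comp hconv
  have hF : Tendsto (fun k : ℕ => f (xhat k) - f (x k)) atTop (nhds 0) := by
    apply squeeze_zero_norm (fun k => hf (xhat k) (x k))
    simpa using hne.const_mul γ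
  -- v k tends to 0
  set v : ℕ → EuclideanSpace ℝ (Fin n) :=
    fun k => e (k + 1) - Matrix.toEuclideanLin A (e k) - (f (xhat k) - f (x k)) with hv
  have hvz : Tendsto v atTop (nhds 0) := by
    have := (he1.sub hA).sub hF
    simpa using this
  have hLv : Tendsto (fun k : ℕ => Matrix.toEuclideanLin L (v k)) atTop (nhds 0) := by
    have hc : Continuous (Matrix.toEuclideanLin L) :=
      (Matrix.toEuclideanLin L).continuous_of_finiteDimensional
    have := (hc.tendsto 0).comp hvz
    simpa [Function.comp_def] using this
  -- key identity
  have hkey : ∀ k : ℕ, ahat_u (k + 1) = a_u k + Matrix.toEuclideanLin L (v k) := by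
    intro k
    have hx : x (k + 1) - Matrix.toEuclideanLin A (x k) - f (x k) =
        Matrix.toEuclideanLin B (u k + a_u k) := by
      rw [hdyn k]; abel
    have hxhat : xhat (k + 1) - Matrix.toEuclideanLin A (xhat k) - f (xhat k) =
        Matrix.toEuclideanLin B (u k + a_u k) + v k := by
      rw [hv, he]
      simp only [map_sub]
      rw [← hx]
      abel
    rw [hahat k, hxhat, map_add, LB_cancel B L hLB]
    abel
  -- component i
  have hcomp : Tendsto (fun k : ℕ => ahat_u (k + 1) i) atTop (nhds 0) := by
    have hpi : Tendsto (fun k : ℕ => (Matrix.toEuclideanLin L (v k)) i) atTop (nhds 0) := by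
      have hc : Continuous (EuclideanSpace.proj i : EuclideanSpace ℝ (Fin n_u) →L[ℝ] ℝ) :=
        (EuclideanSpace.proj i).continuous
      have := (hc.tendsto 0).comp hLv
      simpa [Function.comp_def] using this
    have : (fun k : ℕ => ahat_u (k + 1) i)
        = fun k : ℕ => (Matrix.toEuclideanLin L (v k)) i := by
      funext k
      have := hkey k
      have h2 : ahat_u (k + 1) i = a_u k i + (Matrix.toEuclideanLin L (v k)) i := by
        rw [this]; rfl
      rw [h2, hsupp k i hi, zero_add]
    rwa [this]
  exact (tendsto_add_atTop_iff_nat 1).mp hcomp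
end
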